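/- Let F be a field of characteristic 0, let p(x,y) = ∑ a_{ij} xⁱyʲ, let λ, μ ∈ F, and suppose the local degree of p at (λ,μ) satisfies d ≥ m + n − 1. Then P(J_m(λ), J_n(μ)) = p(λ,μ)·I_{mn}, i.e., its Jordan canonical form consists of mn blocks of size 1 with eigenvalue p(λ,μ). -/

import Mathlib

open Kronecker MvPolynomial Finset

section ScalarHelpers
variable {F : Type*} [Field F]

lemma shift_pow_entry_zero {k : ℕ} (N : Matrix (Fin k) (Fin k) F)
    (hN : N = Matrix.of fun (i j : Fin k) => if (i : ℕ) + 1 = (j : ℕ) then (1 : F) else 0) :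
    ∀ l (i j : Fin k), (j : ℕ) < (i : ℕ) + l → (N ^ l) i j = 0 := by
  intro l
  induction l with
  | zero => intro i j h; simp only [pow_zero, Matrix.one_apply]
            rw [if_neg]; rintro rfl; omega
  | succ l ih =>
    intro i j h
    rw [pow_succ, Matrix.mul_apply]
    refine Finset.sum_eq_zero fun x _ => ?_
    by_cases hx : (x : ℕ) < (i : ℕ) + l
    · rw [ih i x hx, zero_mul]
    · have : N x j = 0 := by
        rw [hN]; simp only [Matrix.of_apply]; rw [if_neg]; omega
      rw [this, mul_zero]

lemma shift_pow_zero {k : ℕ} (N : Matrix (Fin k) (Fin k) F)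
    (hN : N = Matrix.of fun (i j : Fin k) => if (i : ℕ) + 1 = (j : ℕ) then (1 : F) else 0)
    {l : ℕ} (hl : k ≤ l) : N ^ l = 0 := by
  ext i j
  rw [shift_pow_entry_zero N hN l i j (by omega)]
  simp

lemma jordan_pow {k : ℕ} (lam : F) (N J : Matrix (Fin k) (Fin k) F)
    (hN : N = Matrix.of fun (i j : Fin k) => if (i : ℕ) + 1 = (j : ℕ) then (1 : F) else 0)
    (hJ : J = lam • 1 + N) (i : ℕ) :
    J ^ i = ∑ β ∈ range k, (((i.choose β : F)) * lam ^ (i - β)) • N ^ β := by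
  have hc : Commute N (lam • (1 : Matrix (Fin k) (Fin k) F)) :=
    (Commute.one_right N).smul_right lam
  have key : ∀ β, N ^ β * (lam • (1:Matrix (Fin k) (Fin k) F)) ^ (i - β) *
      (i.choose β : Matrix (Fin k) (Fin k) F)
      = ((i.choose β : F) * lam ^ (i - β)) • N ^ β := by
    intro β
    rw [smul_pow, one_pow, mul_smul_comm, mul_one]
    rw [smul_mul_assoc, ← nsmul_eq_mul', ← Nat.cast_smul_eq_nsmul F, mul_smul, smul_comm]
  have h1 : J ^ i = ∑ β ∈ range (i + 1), ((i.choose β : F) * lam ^ (i - β)) • N ^ β := by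
    rw [hJ, add_comm, hc.add_pow]
    exact Finset.sum_congr rfl fun β _ => key β
  have hterm : ∀ β, i < β ∨ k ≤ β → ((i.choose β : F) * lam ^ (i - β)) • N ^ β = 0 := by
    rintro β (hβ | hβ)
    · rw [Nat.choose_eq_zero_of_lt hβ]; simp
    · rw [shift_pow_zero N hN hβ, smul_zero]
  rw [h1]
  rw [Finset.sum_subset (Finset.range_subset_range.2 (le_max_left (i+1) (k)))
      (fun β _ hβ => hterm β (Or.inl (by simp at hβ ⊢; omega)))]
  rw [← Finset.sum_subset (Finset.range_subset_range.2 (le_max_right (i+1) (k)))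
      (fun β _ hβ => hterm β (Or.inr (by simp at hβ ⊢; omega)))]

lemma sum_smul_kron {m n : ℕ} (s t : Finset ℕ) (a b : ℕ → F)
    (A : ℕ → Matrix (Fin m) (Fin m) F) (B : ℕ → Matrix (Fin n) (Fin n) F) :
    ((∑ β ∈ s, a β • A β) ⊗ₖ (∑ γ ∈ t, b γ • B γ)) =
      ∑ β ∈ s, ∑ γ ∈ t, (a β * b γ) • (A β ⊗ₖ B γ) := by
  ext ⟨i, x⟩ ⟨j, y⟩
  simp only [Matrix.kroneckerMap_apply, Matrix.sum_apply, Matrix.smul_apply, smul_eq_mul,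
    Finset.sum_mul_sum]
  exact Finset.sum_congr rfl fun β _ => Finset.sum_congr rfl fun γ _ => by ring

lemma iter_pderiv_monomial (i : Fin 2) (β : ℕ) :
    ∀ (mo : Fin 2 →₀ ℕ) (c : F),
    (fun r => pderiv i r)^[β] (monomial mo c) =
      monomial (mo - Finsupp.single i β) (c * ((mo i).descFactorial β : F)) := by
  induction β with
  | zero => intro mo c; simp
  | succ β ih =>
    intro mo c
    rw [Function.iterate_succ_apply]
    simp only [pderiv_monomial]
    rw [ih]
    congr 1
    · rw [tsub_tsub, ← Finsupp.single_add, add_comm]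
    · rw [Finsupp.tsub_apply, Finsupp.single_eq_same]
      have : (mo i) * ((mo i) - 1).descFactorial β = (mo i).descFactorial (β + 1) := by
        cases h : mo i with
        | zero => simp
        | succ t => rw [Nat.succ_sub_one, Nat.succ_descFactorial_succ]
      rw [mul_assoc, ← Nat.cast_mul, this]

lemma iter_pderiv_sum {A : Type*} (i : Fin 2) (β : ℕ) (s : Finset A)
    (g : A → MvPolynomial (Fin 2) F) :
    (fun r => pderiv i r)^[β] (∑ x ∈ s, g x) = ∑ x ∈ s, (fun r => pderiv i r)^[β] (g x) := by
  induction β generalizing g with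
  | zero => simp
  | succ β ih =>
    rw [Function.iterate_succ_apply, map_sum]
    exact ih _

variable [CharZero F]

lemma hasse_eval (lam mu : F) (p : MvPolynomial (Fin 2) F) (β γ : ℕ) :
    MvPolynomial.eval (fun i : Fin 2 => if i = 0 then lam else mu)
      (((β.factorial * γ.factorial : F))⁻¹ •
        ((fun r => pderiv (0 : Fin 2) r)^[β] ((fun r => pderiv (1 : Fin 2) r)^[γ] p)))
    = ∑ mo ∈ p.support, MvPolynomial.coeff mo p * ((mo 0).choose β : F) *
        ((mo 1).choose γ : F) * lam ^ (mo 0 - β) * mu ^ (mo 1 - γ) := by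
  have h10 : (1 : Fin 2) ≠ 0 := by decide
  have hrw : (fun r => pderiv (0:Fin 2) r)^[β] ((fun r => pderiv (1:Fin 2) r)^[γ] p)
      = ∑ mo ∈ p.support, monomial (mo - Finsupp.single 1 γ - Finsupp.single 0 β)
          (MvPolynomial.coeff mo p * ((mo 1).descFactorial γ : F) *
            ((mo 0).descFactorial β : F)) := by
    conv_lhs => rw [← p.support_sum_monomial_coeff]
    rw [iter_pderiv_sum, iter_pderiv_sum]
    refine Finset.sum_congr rfl fun mo _ => ?_
    rw [iter_pderiv_monomial, iter_pderiv_monomial]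
    congr 2
    rw [Finsupp.tsub_apply, Finsupp.single_eq_of_ne' h10, Nat.sub_zero]
  rw [hrw, MvPolynomial.smul_eq_C_mul, map_mul, eval_C, map_sum, Finset.mul_sum]
  refine Finset.sum_congr rfl fun mo _ => ?_
  rw [eval_monomial]
  rw [Finsupp.prod_fintype _ _ (fun i => pow_zero _)]
  rw [Fin.prod_univ_two]
  simp only [Finsupp.tsub_apply, Finsupp.single_eq_same, Finsupp.single_eq_of_ne h10,
    Finsupp.single_eq_of_ne h10.symm, Nat.sub_zero, if_pos rfl, if_neg h10]
  have hb : (β.factorial : F) ≠ 0 := Nat.cast_ne_zero.mpr (Nat.factorial_ne_zero _)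
  have hg : (γ.factorial : F) ≠ 0 := Nat.cast_ne_zero.mpr (Nat.factorial_ne_zero _)
  rw [Nat.descFactorial_eq_factorial_mul_choose (mo 0) β,
    Nat.descFactorial_eq_factorial_mul_choose (mo 1) γ]
  push_cast
  field_simp

end ScalarHelpers

theorem scalar_matrix_when_local_degree_large
    {F : Type*} [Field F] [CharZero F] {m n : ℕ} (hm : 0 < m) (hn : 0 < n)
    (lam mu : F) (p : MvPolynomial (Fin 2) F) (d : ℕ) (hd1 : 1 ≤ d)
    (hd2 : m + n - 1 ≤ d)
    (H : ℕ → ℕ → MvPolynomial (Fin 2) F → MvPolynomial (Fin 2) F)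
    (hH : ∀ β γ q, H β γ q =
        ((β.factorial * γ.factorial : F))⁻¹ •
          ((fun r => pderiv (0 : Fin 2) r)^[β] ((fun r => pderiv (1 : Fin 2) r)^[γ] q)))
    (hlow : ∀ β γ : ℕ, 1 ≤ β + γ → β + γ < d →
        MvPolynomial.eval (fun i : Fin 2 => if i = 0 then lam else mu) (H β γ p) = 0)
    (hnz : ∃ β γ : ℕ, β + γ = d ∧
        MvPolynomial.eval (fun i : Fin 2 => if i = 0 then lam else mu) (H β γ p) ≠ 0)
    (Jm : Matrix (Fin m) (Fin m) F)
    (hJm : Jm = Matrix.of fun (i j : Fin m) =>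
        if i = j then lam else if (i : ℕ) + 1 = (j : ℕ) then 1 else 0)
    (Jn : Matrix (Fin n) (Fin n) F)
    (hJn : Jn = Matrix.of fun (i j : Fin n) =>
        if i = j then mu else if (i : ℕ) + 1 = (j : ℕ) then 1 else 0)
    (P : Matrix (Fin m × Fin n) (Fin m × Fin n) F)
    (hP : P = ∑ mo ∈ p.support,
        MvPolynomial.coeff mo p • ((Jm ^ (mo 0)) ⊗ₖ (Jn ^ (mo 1)))) :
    P = MvPolynomial.eval (fun i : Fin 2 => if i = 0 then lam else mu) p • 1 := by
  set Nm : Matrix (Fin m) (Fin m) F :=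
    Matrix.of fun (i j : Fin m) => if (i : ℕ) + 1 = (j : ℕ) then (1 : F) else 0 with hNm
  set Nn : Matrix (Fin n) (Fin n) F :=
    Matrix.of fun (i j : Fin n) => if (i : ℕ) + 1 = (j : ℕ) then (1 : F) else 0 with hNn
  have hJm' : Jm = lam • 1 + Nm := by
    rw [hJm]; ext i j
    by_cases h : i = j
    · subst h
      have h2 : ¬((i : ℕ) + 1 = (i : ℕ)) := by omega
      simp [Matrix.one_apply, h2, hNm]
    · simp [Matrix.one_apply, h, hNm]
  have hJn' : Jn = mu • 1 + Nn := by
    rw [hJn]; ext i j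
    by_cases h : i = j
    · subst h
      have h2 : ¬((i : ℕ) + 1 = (i : ℕ)) := by omega
      simp [Matrix.one_apply, h2, hNn]
    · simp [Matrix.one_apply, h, hNn]
  have hkron : ∀ mo : Fin 2 →₀ ℕ, (Jm ^ (mo 0)) ⊗ₖ (Jn ^ (mo 1)) =
      ∑ β ∈ range m, ∑ γ ∈ range n,
        ((((mo 0).choose β : F) * lam ^ (mo 0 - β)) * (((mo 1).choose γ : F) * mu ^ (mo 1 - γ)))
          • ((Nm ^ β) ⊗ₖ (Nn ^ γ)) := by
    intro mo
    rw [jordan_pow lam Nm Jm hNm hJm' (mo 0), jordan_pow mu Nn Jn hNn hJn' (mo 1),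
      sum_smul_kron]
  have hPP : P = ∑ β ∈ range m, ∑ γ ∈ range n,
      (MvPolynomial.eval (fun i : Fin 2 => if i = 0 then lam else mu) (H β γ p))
        • ((Nm ^ β) ⊗ₖ (Nn ^ γ)) := by
    rw [hP]
    simp_rw [hkron, Finset.smul_sum]
    rw [Finset.sum_comm]
    refine Finset.sum_congr rfl fun β _ => ?_
    rw [Finset.sum_comm]
    refine Finset.sum_congr rfl fun γ _ => ?_
    rw [hH, hasse_eval, Finset.sum_smul]
    refine Finset.sum_congr rfl fun mo _ => ?_
    rw [smul_smul]
    congr 1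
    ring
  rw [hPP]
  rw [Finset.sum_eq_single 0 (fun β hβ hβ0 => Finset.sum_eq_zero fun γ hγ => ?_)
      (fun h => absurd (Finset.mem_range.mpr hm) h)]
  · rw [Finset.sum_eq_single 0 (fun γ hγ hγ0 => ?_)
        (fun h => absurd (Finset.mem_range.mpr hn) h)]
    · rw [pow_zero, pow_zero, Matrix.one_kronecker_one]
      congr 1
      rw [hH]
      simp [Nat.factorial_zero]
    · rw [Finset.mem_range] at hγ
      rw [hlow 0 γ (by omega) (lt_of_lt_of_le (by omega : 0 + γ < m + n - 1) hd2), zero_smul]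
  · rw [Finset.mem_range] at hβ hγ
    beta_reduce
    rw [hlow β γ (by omega) (lt_of_lt_of_le (by omega : β + γ < m + n - 1) hd2), zero_smul]
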